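/- Let A be an abelian group with subgroup B. Then for all k ≥ 1, D_k(A) ≤ D_{D_k(A/B)}(B), where D_j denotes the generalized Davenport constant. -/

import Mathlib

open scoped DirectSum

/-- The generalized Davenport constant `D_k(A)`: the maximal length of a zero-sum
sequence (multiset) over `A` that cannot be factored into more than `k` nonempty
zero-sum subsequences. -/
noncomputable def DavK (A : Type*) [AddCommGroup A] (k : ℕ) : ℕ :=
  sSup {n : ℕ | ∃ S : Multiset A, S.sum = 0 ∧ Multiset.card S = n ∧
    ∀ P : Multiset (Multiset A), P.sum = S →
      (∀ T ∈ P, T ≠ 0 ∧ Multiset.sum T = 0) → Multiset.card P ≤ k}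

section Aux


theorem msplit {α β : Type*} [DecidableEq α] (f : α → β) :
    ∀ (t : Multiset β) (u : Multiset β) (S : Multiset α), S.map f = t + u →
      ∃ s₁ s₂ : Multiset α, S = s₁ + s₂ ∧ s₁.map f = t ∧ s₂.map f = u := by
  intro t
  induction t using Multiset.induction_on with
  | empty => intro u S h; exact ⟨0, S, by simp, by simp, by simpa using h⟩
  | cons b t' ih =>
    intro u S h
    rw [Multiset.cons_add] at h
    obtain ⟨a, haS, hfa, herase⟩ := (Multiset.map_eq_cons f S (t' + u) b).mpr h
    obtain ⟨s₁, s₂, hsplit, h1, h2⟩ := ih u (S.erase a) herase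
    refine ⟨a ::ₘ s₁, s₂, ?_, by simp [h1, hfa], h2⟩
    rw [Multiset.cons_add, ← hsplit, Multiset.cons_erase haS]

/-- Lift a factorization of `S.map f` to a factorization of `S`. -/
theorem mlift {α β : Type*} (f : α → β) :
    ∀ (P : Multiset (Multiset β)) (S : Multiset α), S.map f = P.sum →
      ∃ Q : Multiset (Multiset α), Q.sum = S ∧ Q.map (Multiset.map f) = P := by
  classical
  intro P
  induction P using Multiset.induction_on with
  | empty =>
    intro S h
    have h0 : S = 0 := by simpa using congrArg Multiset.card h
    exact ⟨0, by simp [h0], by simp⟩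
  | cons T P' ih =>
    intro S h
    rw [Multiset.sum_cons] at h
    obtain ⟨s₁, s₂, rfl, h1, h2⟩ := msplit f T P'.sum S h
    obtain ⟨Q', hQ'sum, hQ'map⟩ := ih s₂ h2
    exact ⟨s₁ ::ₘ Q', by simp [hQ'sum], by simp [hQ'map, h1]⟩


/-- card of a sum of nonempty multisets is at least the number of parts. -/
theorem card_le_card_sum {α : Type*} :
    ∀ (P : Multiset (Multiset α)), (∀ T ∈ P, T ≠ 0) → Multiset.card P ≤ Multiset.card P.sum := by
  intro P
  induction P using Multiset.induction_on with
  | empty => simp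
  | cons T P' ih =>
    intro h
    rw [Multiset.sum_cons, Multiset.card_cons, Multiset.card_add]
    have hT : 1 ≤ Multiset.card T := by
      rcases Multiset.exists_mem_of_ne_zero (h T (Multiset.mem_cons_self T P')) with ⟨a, ha⟩
      exact Multiset.card_pos_iff_exists_mem.mpr ⟨a, ha⟩
    have := ih (fun T hT => h T (Multiset.mem_cons_of_mem hT))
    omega

/-- Every nonempty zero-sum multiset over a finite group has a short nonempty zero-sum
sub-multiset. -/
theorem exists_short_zs {G : Type*} [AddCommGroup G] [Finite G] (S : Multiset G)
    (hS : S ≠ 0) (hsum : S.sum = 0) :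
    ∃ T : Multiset G, T ≤ S ∧ T ≠ 0 ∧ T.sum = 0 ∧ Multiset.card T ≤ Nat.card G := by
  have : Fintype G := Fintype.ofFinite G
  rcases le_or_gt (Multiset.card S) (Nat.card G) with h | h
  · exact ⟨S, le_refl S, hS, hsum, h⟩
  · set l : List G := S.toList with hl
    have hlen : Nat.card G < l.length := by
      have : l.length = Multiset.card S := by
        rw [hl]; exact Multiset.length_toList S
      omega
    -- partial sums on Fin (Nat.card G + 1)
    have hcard : Fintype.card G < Fintype.card (Fin (Nat.card G + 1)) := by
      simp [Nat.card_eq_fintype_card]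
    obtain ⟨i, j, hij, heq⟩ :=
      Fintype.exists_ne_map_eq_of_card_lt (fun j : Fin (Nat.card G + 1) => (l.take j).sum) hcard
    -- wlog i < j
    wlog hlt : (i : ℕ) < (j : ℕ) generalizing i j
    · have hji : (j : ℕ) < (i : ℕ) := by
        rcases Nat.lt_or_ge (j : ℕ) (i : ℕ) with h' | h'
        · exact h'
        · exact absurd (Fin.ext (by omega : (i:ℕ) = (j:ℕ))) hij
      exact this j i hij.symm heq.symm hji
    set T : Multiset G := (((l.drop i).take ((j:ℕ) - i) : List G) : Multiset G) with hT
    have htake : l.take j = l.take i ++ (l.drop i).take ((j : ℕ) - i) := by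
      have : (j : ℕ) = i + ((j : ℕ) - i) := by omega
      rw [this, List.take_add]
      congr 2
      omega
    have hsumT : T.sum = 0 := by
      have := heq
      rw [htake, List.sum_append] at this
      have h0 : ((l.drop i).take ((j:ℕ) - i)).sum = 0 := by
        have := congrArg (fun x => -(l.take i).sum + x) this
        simpa using this.symm
      simpa [hT, Multiset.sum_coe] using h0
    have hTne : T ≠ 0 := by
      have hlenT : ((l.drop i).take ((j:ℕ) - i)).length = (j:ℕ) - i := by
        rw [List.length_take, List.length_drop]
        have hj : (j : ℕ) ≤ Nat.card G := by omega
        omega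
      intro h0
      have : Multiset.card T = 0 := by rw [h0]; simp
      rw [hT] at this
      simp only [Multiset.coe_card] at this
      omega
    have hTle : T ≤ S := by
      have hsub : ((l.drop i).take ((j:ℕ) - i)).Sublist l :=
        ((l.drop i).take_sublist _).trans (l.drop_sublist i)
      calc T ≤ (l : Multiset G) := Multiset.coe_le.mpr hsub.subperm
        _ = S := by rw [hl]; exact Multiset.coe_toList S
    have hTcard : Multiset.card T ≤ Nat.card G := by
      rw [hT]
      simp only [Multiset.coe_card]
      rw [List.length_take]
      have : (j : ℕ) ≤ Nat.card G := by omega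
      omega
    exact ⟨T, hTle, hTne, hsumT, hTcard⟩


theorem joinmap {γ M : Type*} [AddCommMonoid M] (g : γ → M) :
    ∀ (Q : Multiset (Multiset γ)), (Q.map (fun U => (U.map g).sum)).sum = ((Q.sum).map g).sum := by
  intro Q
  induction Q using Multiset.induction_on with
  | empty => simp
  | cons T Q' ih => simp [ih]

theorem mem_le_sum {γ : Type*} {W : Multiset (Multiset γ)} {a : Multiset γ} (h : a ∈ W) :
    a ≤ W.sum := by
  obtain ⟨W', rfl⟩ := Multiset.exists_cons_of_mem h
  rw [Multiset.sum_cons]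
  exact Multiset.le_add_right _ _




def dset (A : Type*) [AddCommGroup A] (k : ℕ) : Set ℕ :=
  {n : ℕ | ∃ S : Multiset A, S.sum = 0 ∧ Multiset.card S = n ∧
    ∀ P : Multiset (Multiset A), P.sum = S →
      (∀ T ∈ P, T ≠ 0 ∧ Multiset.sum T = 0) → Multiset.card P ≤ k}

theorem DavK_eq_sSup (A : Type*) [AddCommGroup A] (k : ℕ) : DavK A k = sSup (dset A k) := rfl

theorem exists_full_factorization {G : Type*} [AddCommGroup G] [Finite G] :
    ∀ (n : ℕ) (S : Multiset G), Multiset.card S = n → S.sum = 0 →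
      ∃ P : Multiset (Multiset G), P.sum = S ∧ (∀ T ∈ P, T ≠ 0 ∧ T.sum = 0) ∧
        Multiset.card S ≤ Multiset.card P * Nat.card G := by
  intro n
  induction n using Nat.strong_induction_on with
  | _ n ih =>
    intro S hcard hsum
    by_cases hS : S = 0
    · exact ⟨0, by simp [hS], by simp, by simp [hS]⟩
    · obtain ⟨T, hle, hne, hz, hc⟩ := exists_short_zs S hS hsum
      have : DecidableEq G := Classical.decEq _
      set R := S - T with hR
      have hsplit : R + T = S := tsub_add_cancel_of_le hle
      have hsumR : R.sum = 0 := by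
        have := congrArg Multiset.sum hsplit
        rw [Multiset.sum_add, hz, hsum, add_zero] at this
        exact this
      have hTpos : 1 ≤ Multiset.card T := by
        rcases Multiset.exists_mem_of_ne_zero hne with ⟨a, ha⟩
        exact Multiset.card_pos_iff_exists_mem.mpr ⟨a, ha⟩
      have hcards : Multiset.card R + Multiset.card T = n := by
        rw [← hcard, ← hsplit, Multiset.card_add]
      obtain ⟨P', hP'sum, hP'parts, hP'card⟩ :=
        ih (Multiset.card R) (by omega) R rfl hsumR
      refine ⟨T ::ₘ P', ?_, ?_, ?_⟩
      · rw [Multiset.sum_cons, add_comm, ← hsplit]; rw [hP'sum]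
      · intro U hU
        rcases Multiset.mem_cons.mp hU with rfl | hU'
        · exact ⟨hne, hz⟩
        · exact hP'parts U hU'
      · rw [Multiset.card_cons]
        calc Multiset.card S = Multiset.card T + Multiset.card R := by omega
          _ ≤ Nat.card G + Multiset.card P' * Nat.card G := by
              have := hP'card; omega
          _ = (Multiset.card P' + 1) * Nat.card G := by ring
  
theorem zero_mem_dset (A : Type*) [AddCommGroup A] (k : ℕ) : 0 ∈ dset A k := by
  refine ⟨0, by simp, by simp, ?_⟩
  intro P hPsum hparts
  have h1 := card_le_card_sum P (fun T hT => (hparts T hT).1)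
  rw [hPsum] at h1
  simpa using h1.trans (by simp)

theorem mem_dset_le {G : Type*} [AddCommGroup G] [Finite G] {k n : ℕ} (h : n ∈ dset G k) :
    n ≤ k * Nat.card G := by
  obtain ⟨S, hsum, hcard, hmax⟩ := h
  obtain ⟨P, hPsum, hparts, hbound⟩ := exists_full_factorization (Multiset.card S) S rfl hsum
  have hk : Multiset.card P ≤ k := hmax P hPsum hparts
  calc n = Multiset.card S := hcard.symm
    _ ≤ Multiset.card P * Nat.card G := hbound
    _ ≤ k * Nat.card G := Nat.mul_le_mul_right _ hk

theorem dset_bddAbove (G : Type*) [AddCommGroup G] [Finite G] (k : ℕ) :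
    BddAbove (dset G k) := ⟨k * Nat.card G, fun _ h => mem_dset_le h⟩

theorem le_DavK {G : Type*} [AddCommGroup G] [Finite G] {k n : ℕ} (h : n ∈ dset G k) :
    n ≤ DavK G k := le_csSup (dset_bddAbove G k) h

theorem DavK_le {A : Type*} [AddCommGroup A] {k c : ℕ} (h : ∀ n ∈ dset A k, n ≤ c) :
    DavK A k ≤ c := csSup_le ⟨0, zero_mem_dset A k⟩ h

theorem dset_mono {A : Type*} [AddCommGroup A] {k k' : ℕ} (hk : k ≤ k') :
    dset A k ⊆ dset A k' := by
  rintro n ⟨S, h1, h2, h3⟩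
  exact ⟨S, h1, h2, fun P hP hparts => (h3 P hP hparts).trans hk⟩

theorem DavK_mono {G : Type*} [AddCommGroup G] [Finite G] {k k' : ℕ} (hk : k ≤ k') :
    DavK G k ≤ DavK G k' := DavK_le (fun n hn => le_DavK (dset_mono hk hn))

theorem sumsum {G : Type*} [AddCommMonoid G] (Q : Multiset (Multiset G)) :
    (Q.map Multiset.sum).sum = (Q.sum).sum := by
  have := joinmap (id : G → G) Q
  simpa using this

theorem core {G H : Type*} [AddCommGroup G] [Finite G] [AddCommGroup H] [Finite H]
    (f : G →+ H) (k : ℕ) :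
    DavK G k ≤ DavK H (DavK (↥f.ker) k) := by
  apply DavK_le
  rintro n ⟨S, hsum, hcard, hmax⟩
  by_cases hS0 : S = 0
  · subst hS0; simp at hcard; omega
  set mset : Set ℕ :=
    {r | ∃ Q : Multiset (Multiset G), Q.sum = S ∧ (∀ T ∈ Q, T ≠ 0 ∧ f T.sum = 0) ∧
      Multiset.card Q = r} with hmset
  have hbddm : BddAbove mset := by
    refine ⟨n, ?_⟩
    rintro r ⟨Q, hQsum, hQparts, hQcard⟩
    have := card_le_card_sum Q (fun T hT => (hQparts T hT).1)
    rw [hQsum] at this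
    omega
  have hne : mset.Nonempty := ⟨1, {S}, by simp, by
      intro T hT
      rw [Multiset.mem_singleton] at hT
      subst hT
      exact ⟨hS0, by rw [hsum, map_zero]⟩, by simp⟩
  set m := sSup mset with hm
  have hmmem : m ∈ mset := Nat.sSup_mem hne hbddm
  obtain ⟨Q₀, hQ₀sum, hQ₀parts, hQ₀card⟩ := hmmem
  have hmle : ∀ r ∈ mset, r ≤ m := fun r hr => le_csSup hbddm hr
  -- Claim B : m ≤ DavK (ker f) k
  set F : {T // T ∈ Q₀} → ↥f.ker :=
    fun T => ⟨T.1.sum, AddMonoidHom.mem_ker.mpr (hQ₀parts T.1 T.2).2⟩ with hF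
  set C : Multiset ↥f.ker := Q₀.attach.map F with hC
  have hCcoe : C.map (f.ker.subtype) = Q₀.map Multiset.sum := by
    rw [hC, Multiset.map_map]
    exact Multiset.attach_map_val' Q₀ Multiset.sum
  have hCsum : C.sum = 0 := by
    have h1 : f.ker.subtype C.sum = ((C.map f.ker.subtype)).sum :=
      map_multiset_sum (f.ker.subtype) C
    rw [hCcoe, sumsum, hQ₀sum, hsum] at h1
    exact f.ker.subtype_injective (by simpa using h1)
  have hCmax : ∀ R : Multiset (Multiset ↥f.ker), R.sum = C →
      (∀ T ∈ R, T ≠ 0 ∧ Multiset.sum T = 0) → Multiset.card R ≤ k := by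
    intro R hRsum hRparts
    obtain ⟨Q', hQ'sum, hQ'map⟩ := mlift F R Q₀.attach (by rw [← hC, ← hRsum])
    set P' : Multiset (Multiset G) := Q'.map (fun U => (U.map (fun (t : {T // T ∈ Q₀}) => t.1)).sum) with hP'
    have hP'sum : P'.sum = S := by
      rw [hP', joinmap, hQ'sum, Multiset.attach_map_val, hQ₀sum]
    have hP'parts : ∀ V ∈ P', V ≠ 0 ∧ V.sum = 0 := by
      intro V hV
      rw [hP'] at hV
      obtain ⟨U, hU, rfl⟩ := Multiset.mem_map.mp hV
      have hUR : Multiset.map F U ∈ R := by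
        rw [← hQ'map]; exact Multiset.mem_map_of_mem _ hU
      have hUne : U ≠ 0 := by
        intro h0
        exact (hRparts _ hUR).1 (by rw [h0, Multiset.map_zero])
      constructor
      · obtain ⟨t, ht⟩ := Multiset.exists_mem_of_ne_zero hUne
        have h1 : t.1 ∈ U.map (fun (t : {T // T ∈ Q₀}) => t.1) := Multiset.mem_map_of_mem _ ht
        have h2 : t.1 ≤ (U.map (fun (t : {T // T ∈ Q₀}) => t.1)).sum := mem_le_sum h1
        have h3 : t.1 ≠ 0 := (hQ₀parts t.1 t.2).1
        intro h0
        rw [h0] at h2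
        exact h3 (Multiset.le_zero.mp h2)
      · have h1 : ((U.map (fun (t : {T // T ∈ Q₀}) => t.1)).sum).sum
            = ((U.map (fun (t : {T // T ∈ Q₀}) => t.1)).map Multiset.sum).sum := (sumsum _).symm
        rw [Multiset.map_map] at h1
        have h2 : (U.map (Multiset.sum ∘ fun (t : {T // T ∈ Q₀}) => t.1)) = (U.map F).map f.ker.subtype := by
          rw [Multiset.map_map]
          rfl
        rw [h2] at h1
        have h3 : ((U.map F).map f.ker.subtype).sum = f.ker.subtype ((U.map F).sum) :=
          (map_multiset_sum (f.ker.subtype) _).symm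
        rw [(hRparts _ hUR).2] at h3
        rw [h1, h3]
        simp
    have hcardP' : Multiset.card P' = Multiset.card R := by
      rw [hP', Multiset.card_map, ← hQ'map, Multiset.card_map]
    have := hmax P' hP'sum hP'parts
    omega
  have hB : m ≤ DavK (↥f.ker) k := by
    have hCmem : Multiset.card C ∈ dset (↥f.ker) k := ⟨C, hCsum, rfl, hCmax⟩
    have : Multiset.card C = m := by rw [hC, Multiset.card_map, Multiset.card_attach, hQ₀card]
    rw [← this]
    exact le_DavK hCmem
  -- Claim A : n ≤ DavK H m
  have hA : n ≤ DavK H m := by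
    have hmem : n ∈ dset H m := by
      refine ⟨S.map f, by rw [← map_multiset_sum, hsum, map_zero], by rw [Multiset.card_map, hcard], ?_⟩
      intro P hPsum hPparts
      obtain ⟨Q, hQsum, hQmap⟩ := mlift f P S hPsum.symm
      have : Multiset.card Q ∈ mset := by
        refine ⟨Q, hQsum, ?_, rfl⟩
        intro T hT
        have hTP : T.map f ∈ P := by rw [← hQmap]; exact Multiset.mem_map_of_mem _ hT
        constructor
        · intro h0
          exact (hPparts _ hTP).1 (by rw [h0, Multiset.map_zero])
        · rw [map_multiset_sum]
          exact (hPparts _ hTP).2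
      have := hmle _ this
      rw [← hQmap, Multiset.card_map]
      omega
    exact le_DavK hmem
  exact hA.trans (DavK_mono hB)
theorem dset_subset_of_equiv {G H : Type*} [AddCommGroup G] [AddCommGroup H] (e : G ≃+ H)
    (k : ℕ) : dset G k ⊆ dset H k := by
  rintro n ⟨S, hsum, hcard, hmax⟩
  refine ⟨S.map e, ?_, by rw [Multiset.card_map, hcard], ?_⟩
  · rw [← map_multiset_sum e]
    simp [hsum]
  · intro P' hP'sum hP'parts
    set P : Multiset (Multiset G) := P'.map (Multiset.map e.symm) with hP
    have hPsum : P.sum = S := by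
      have h1 := map_multiset_sum (Multiset.mapAddMonoidHom (e.symm : H → G)) P'
      simp only [Multiset.coe_mapAddMonoidHom] at h1
      rw [hP, ← h1, hP'sum, Multiset.map_map]
      simp
    have hcardP : Multiset.card P = Multiset.card P' := by rw [hP, Multiset.card_map]
    rw [← hcardP]
    apply hmax P hPsum
    intro T hT
    rw [hP] at hT
    obtain ⟨T', hT', rfl⟩ := Multiset.mem_map.mp hT
    constructor
    · intro h0
      exact (hP'parts T' hT').1 (Multiset.map_eq_zero.mp h0)
    · rw [← map_multiset_sum e.symm]
      simp [(hP'parts T' hT').2]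

theorem DavK_congr {G H : Type*} [AddCommGroup G] [AddCommGroup H] (e : G ≃+ H) (k : ℕ) :
    DavK G k = DavK H k := by
  rw [DavK_eq_sSup, DavK_eq_sSup,
    Set.Subset.antisymm (dset_subset_of_equiv e k) (dset_subset_of_equiv e.symm k)]


noncomputable def zmodChar (m : ℕ) [NeZero m] : ZMod m →+ AddCircle (1 : ℚ) :=
  ZMod.lift m ⟨zmultiplesHom _ (((m : ℚ)⁻¹ : ℚ) : AddCircle (1 : ℚ)), by
    have hm : (m : ℚ) ≠ 0 := Nat.cast_ne_zero.mpr (NeZero.ne m)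
    show (m : ℤ) • (((m : ℚ)⁻¹ : ℚ) : AddCircle (1 : ℚ)) = 0
    rw [← AddCircle.coe_zsmul]
    have h1 : (m : ℤ) • ((m : ℚ)⁻¹ : ℚ) = 1 := by
      rw [zsmul_eq_mul]
      push_cast
      field_simp
    rw [h1]
    exact AddCircle.coe_period 1⟩

theorem zmodChar_intCast (m : ℕ) [NeZero m] (z : ℤ) :
    zmodChar m ((z : ℤ) : ZMod m) = ((z / m : ℚ) : AddCircle (1 : ℚ)) := by
  unfold zmodChar
  rw [ZMod.lift_coe]
  show z • (((m : ℚ)⁻¹ : ℚ) : AddCircle (1 : ℚ)) = _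
  rw [← AddCircle.coe_zsmul]
  congr 1

noncomputable def zmodCharHom (m : ℕ) [NeZero m] : ZMod m →+ (ZMod m →+ AddCircle (1 : ℚ)) :=
  ZMod.lift m ⟨zmultiplesHom _ (zmodChar m), by
    show (m : ℤ) • (zmodChar m) = 0
    ext x
    show (m : ℤ) • (zmodChar m x) = 0
    rw [← map_zsmul]
    have h1 : (m : ℤ) • x = 0 := by
      rw [zsmul_eq_mul]
      push_cast
      simp
    rw [h1, map_zero]⟩

theorem zmodCharHom_apply (m : ℕ) [NeZero m] (z : ℤ) (x : ZMod m) :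
    zmodCharHom m ((z : ℤ) : ZMod m) x = z • zmodChar m x := by
  unfold zmodCharHom
  rw [ZMod.lift_coe]
  rfl

theorem zmodCharHom_bijective (m : ℕ) [NeZero m] : Function.Bijective (zmodCharHom m) := by
  have hm : (m : ℚ) ≠ 0 := Nat.cast_ne_zero.mpr (NeZero.ne m)
  constructor
  · -- injective
    unfold zmodCharHom
    rw [ZMod.lift_injective]
    intro z hz
    have hz2 : z • zmodChar m = 0 := hz
    have h1 : (z • zmodChar m) (((1 : ℤ) : ZMod m)) = 0 := by rw [hz2]; rfl
    have h2 : (z • zmodChar m) (((1 : ℤ) : ZMod m)) = ((z / m : ℚ) : AddCircle (1 : ℚ)) := by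
      show z • (zmodChar m (((1 : ℤ) : ZMod m))) = _
      rw [zmodChar_intCast, ← AddCircle.coe_zsmul]
      congr 1
      rw [zsmul_eq_mul]
      push_cast
      ring
    rw [h2] at h1
    obtain ⟨t, ht⟩ := AddCircle.coe_eq_zero_iff _ |>.mp h1
    have hzt : (z : ℚ) = t * m := by
      have h := ht
      rw [zsmul_eq_mul] at h
      push_cast at h
      field_simp at h
      linarith
    have hz' : z = t * m := by exact_mod_cast hzt
    rw [hz']
    push_cast
    simp
  · -- surjective
    intro c
    obtain ⟨q, hq⟩ := QuotientAddGroup.mk_surjective (c ((1 : ℤ) : ZMod m))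
    have hc : (m : ℤ) • c (((1 : ℤ) : ZMod m)) = 0 := by
      rw [← map_zsmul]
      have h1 : (m : ℤ) • ((1 : ℤ) : ZMod m) = 0 := by
        rw [zsmul_eq_mul]; push_cast; simp
      rw [h1, map_zero]
    have h0 : (((m : ℤ) • q : ℚ) : AddCircle (1 : ℚ)) = 0 := by
      rw [AddCircle.coe_zsmul]
      show (m : ℤ) • (q : AddCircle (1 : ℚ)) = 0
      rw [hq, hc]
    obtain ⟨t, ht⟩ := AddCircle.coe_eq_zero_iff _ |>.mp h0
    have hqt : q = (t : ℚ) / m := by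
      have h := ht
      rw [zsmul_eq_mul, zsmul_eq_mul] at h
      push_cast at h
      field_simp
      linarith
    refine ⟨((t : ℤ) : ZMod m), ?_⟩
    apply AddMonoidHom.ext
    intro y
    obtain ⟨z, rfl⟩ := ZMod.intCast_surjective y
    rw [zmodCharHom_apply]
    have hcast : ((z : ℤ) : ZMod m) = z • ((1 : ℤ) : ZMod m) := by
      push_cast
      rw [zsmul_one]
    rw [zmodChar_intCast]
    rw [hcast, map_zsmul, ← hq, hqt]
    rw [← AddCircle.coe_zsmul, ← AddCircle.coe_zsmul]
    congr 1
    rw [zsmul_eq_mul, zsmul_eq_mul]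
    push_cast
    ring
noncomputable def zmodCharEquiv (m : ℕ) [NeZero m] : ZMod m ≃+ CharacterModule (ZMod m) :=
  AddEquiv.ofBijective (zmodCharHom m) (zmodCharHom_bijective m)

/-- Precomposition equivalence on hom groups. -/
def homCongr {A B C : Type*} [AddCommGroup A] [AddCommGroup B] [AddCommGroup C]
    (e : A ≃+ B) : (A →+ C) ≃+ (B →+ C) where
  toFun f := f.comp e.symm.toAddMonoidHom
  invFun g := g.comp e.toAddMonoidHom
  left_inv f := by ext x; simp
  right_inv g := by ext x; simp
  map_add' f g := by ext x; simp

theorem char_self_equiv (G : Type*) [AddCommGroup G] [Finite G] :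
    Nonempty (G ≃+ CharacterModule G) := by
  classical
  obtain ⟨ι, hι, n, hn, ⟨e⟩⟩ := AddCommGroup.equiv_directSum_zmod_of_finite' G
  have : ∀ i, NeZero (n i) := fun i => NeZero.of_gt (hn i)
  let e1 : (G →+ AddCircle (1 : ℚ)) ≃+ ((⨁ i, ZMod (n i)) →+ AddCircle (1 : ℚ)) :=
    homCongr e
  let e2 : ((⨁ i, ZMod (n i)) →+ AddCircle (1 : ℚ)) ≃+ (∀ i, ZMod (n i) →+ AddCircle (1 : ℚ)) :=
    (DFinsupp.liftAddHom (β := fun i => ZMod (n i)) (γ := AddCircle (1 : ℚ))).symm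
  let e3 : (∀ i, ZMod (n i) →+ AddCircle (1 : ℚ)) ≃+ (∀ i, ZMod (n i)) :=
    AddEquiv.piCongrRight (fun i => (zmodCharEquiv (n i)).symm)
  let e4 : (∀ i, ZMod (n i)) ≃+ ⨁ i, ZMod (n i) := (DirectSum.addEquivProd _).symm
  exact ⟨e.trans (e4.symm.trans (e3.symm.trans (e2.symm.trans e1.symm)))⟩



/-- For a finite abelian group `A` and subgroup `B`, there is a surjective hom `A →+ B`
whose kernel is isomorphic to `A ⧸ B`. -/
theorem exists_surj_to_subgroup (A : Type*) [AddCommGroup A] [Finite A] (B : AddSubgroup A) :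
    ∃ φ : A →+ ↥B, Function.Surjective φ ∧ Nonempty (↥φ.ker ≃+ (A ⧸ B)) := by
  classical
  obtain ⟨eA⟩ := char_self_equiv A
  obtain ⟨eB⟩ := char_self_equiv ↥B
  obtain ⟨eQ⟩ := char_self_equiv (A ⧸ B)
  -- restriction map
  have hf_inj : Function.Injective ⇑(B.subtype.toIntLinearMap) := Subtype.coe_injective
  set res := (CharacterModule.dual (B.subtype.toIntLinearMap)) with hres
  have hres_surj : Function.Surjective ⇑res :=
    CharacterModule.dual_surjective_of_injective _ hf_inj
  set φ : A →+ ↥B :=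
    { toFun := fun a => eB.symm (res (eA a))
      map_zero' := by simp
      map_add' := by intro a a'; simp [map_add] } with hφ
  have hφ_surj : Function.Surjective φ := by
    intro b
    obtain ⟨χ, hχ⟩ := hres_surj (eB b)
    obtain ⟨a, ha⟩ := eA.surjective χ
    refine ⟨a, ?_⟩
    show eB.symm (res (eA a)) = b
    rw [ha, hχ, eB.symm_apply_apply]
  refine ⟨φ, hφ_surj, ?_⟩
  -- the kernel of the restriction map
  -- Θ : CharacterModule (A ⧸ B) →+ CharacterModule A  (precompose with mk')
  set Θ : CharacterModule (A ⧸ B) →+ CharacterModule A :=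
    { toFun := fun c => c.comp (QuotientAddGroup.mk' B)
      map_zero' := by ext x; rfl
      map_add' := by intro c c'; ext x; rfl } with hΘ
  -- x ∈ ker φ ↔ res (eA x) = 0
  have hker_iff : ∀ x : A, x ∈ φ.ker ↔ res (eA x) = 0 := by
    intro x
    rw [AddMonoidHom.mem_ker]
    constructor
    · intro h
      have : eB.symm (res (eA x)) = 0 := h
      have := congrArg eB this
      simpa using this
    · intro h
      show eB.symm (res (eA x)) = 0
      rw [h, map_zero]
  -- the equivalence: ker φ ≃+ {c : CharacterModule A // res c = 0} ≃+ CharacterModule (A⧸B) ≃+ A⧸B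
  -- we build ker φ ≃+ A ⧸ B directly
  -- injective and "surjective onto ker res" facts about Θ
  have hΘ_inj : Function.Injective Θ := by
    intro c c' h
    ext x
    obtain ⟨a, rfl⟩ := QuotientAddGroup.mk'_surjective B x
    exact congrFun (congrArg (fun (g : A →+ AddCircle (1:ℚ)) => (g : A → AddCircle (1:ℚ))) h) a
  have hΘ_res : ∀ c, res (Θ c) = 0 := by
    intro c
    ext b
    show c (QuotientAddGroup.mk' B b) = 0
    have : QuotientAddGroup.mk' B (b : A) = 0 := by
      rw [QuotientAddGroup.mk'_apply]
      exact (QuotientAddGroup.eq_zero_iff _).mpr b.2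
    rw [this, map_zero]
  have hΘ_surj : ∀ χ : CharacterModule A, res χ = 0 → ∃ c, Θ c = χ := by
    intro χ hχ
    have hvanish : ∀ b ∈ B, χ b = 0 := by
      intro b hb
      have := congrFun (congrArg (fun (g : ↥B →+ AddCircle (1:ℚ)) => (g : ↥B → AddCircle (1:ℚ))) hχ) ⟨b, hb⟩
      exact this
    refine ⟨QuotientAddGroup.lift B χ hvanish, ?_⟩
    ext x
    rfl
  -- now build the equivalence
  -- E : A ⧸ B →+ ker φ
  have hmem : ∀ q : A ⧸ B, eA.symm (Θ (eQ q)) ∈ φ.ker := by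
    intro q
    rw [hker_iff]
    have : eA (eA.symm (Θ (eQ q))) = Θ (eQ q) := eA.apply_symm_apply _
    rw [this]
    exact hΘ_res _
  set E : (A ⧸ B) →+ ↥φ.ker :=
    { toFun := fun q => ⟨eA.symm (Θ (eQ q)), hmem q⟩
      map_zero' := by
        apply Subtype.ext
        simp
      map_add' := by
        intro q q'
        apply Subtype.ext
        simp } with hE
  have hE_bij : Function.Bijective E := by
    constructor
    · intro q q' h
      have h1 : eA.symm (Θ (eQ q)) = eA.symm (Θ (eQ q')) := congrArg Subtype.val h
      have h2 : Θ (eQ q) = Θ (eQ q') := eA.symm.injective h1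
      exact eQ.injective (hΘ_inj h2)
    · rintro ⟨x, hx⟩
      rw [hker_iff] at hx
      obtain ⟨c, hc⟩ := hΘ_surj (eA x) hx
      refine ⟨eQ.symm c, ?_⟩
      apply Subtype.ext
      show eA.symm (Θ (eQ (eQ.symm c))) = x
      rw [eQ.apply_symm_apply, hc, eA.symm_apply_apply]
  exact ⟨(AddEquiv.ofBijective E hE_bij).symm⟩

end Aux

/-- For a subgroup `B` of a finite abelian group `A` and `k ≥ 1`,
`D_k(A) ≤ D_{D_k(A/B)}(B)`. -/
theorem stmt5 (A : Type*) [AddCommGroup A] [Finite A] (B : AddSubgroup A)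
    (k : ℕ) (hk : 1 ≤ k) :
    DavK A k ≤ DavK B (DavK (A ⧸ B) k) := by
  obtain ⟨φ, hsurj, ⟨eker⟩⟩ := exists_surj_to_subgroup A B
  have h1 : DavK A k ≤ DavK ↥B (DavK ↥φ.ker k) := core φ k
  have h2 : DavK ↥φ.ker k = DavK (A ⧸ B) k := DavK_congr eker k
  rw [h2] at h1
  exact h1
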